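/- arXiv:1601.03919 — 7 statements merged into one kernel-verified Lean document; each statement's English description precedes it below -/
import Mathlib

section
/- Let (X,d,μ) be a metric measure space. If for every x ∈ X the function r ↦ μ(B(x,r)) is continuous on (0,∞), then μ is continuous with respect to the metric d. -/
open MeasureTheory Metric Set Filter Topology

/-- If for every x the function r ↦ μ(B(x,r)) is continuous on (0,∞), then
μ is continuous with respect to the metric d. -/
theorem measure_continuous_of_radial_continuity {X : Type*} [MetricSpace X] [MeasurableSpace X]
    [OpensMeasurableSpace X] (μ : Measure X)
    (hpos : ∀ (x : X) (r : ℝ), 0 < r → 0 < μ (ball x r))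
    (hfin : ∀ (x : X) (r : ℝ), 0 < r → μ (ball x r) < ⊤)
    (hcont : ∀ x : X, ContinuousOn (fun r : ℝ => μ (ball x r)) (Ioi 0)) :
    ∀ (x : X) (r : ℝ), 0 < r →
      Tendsto (fun y : X => μ ((ball x r \ ball y r) ∪ (ball y r \ ball x r)))
        (nhds x) (nhds 0) := by
  intro x r hr
  have hd : Tendsto (fun y : X => dist y x) (𝓝 x) (𝓝 0) := by
    exact tendsto_iff_dist_tendsto_zero.mp tendsto_id
  have hdr : ∀ᶠ y in 𝓝 x, dist y x < r := hd.eventually (eventually_lt_nhds hr)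
  -- big radius tendsto
  have h1 : Tendsto (fun y : X => r + dist y x) (𝓝 x) (𝓝[Ioi 0] r) := by
    refine tendsto_nhdsWithin_iff.mpr ⟨by simpa using tendsto_const_nhds.add hd, ?_⟩
    filter_upwards with y
    have := dist_nonneg (x := y) (y := x)
    simp only [mem_Ioi]; linarith
  have h2 : Tendsto (fun y : X => r - dist y x) (𝓝 x) (𝓝[Ioi 0] r) := by
    refine tendsto_nhdsWithin_iff.mpr ⟨by simpa using tendsto_const_nhds.sub hd, ?_⟩
    filter_upwards [hdr] with y hy
    simp only [mem_Ioi]; linarith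
  have hbig : Tendsto (fun y : X => μ (ball x (r + dist y x))) (𝓝 x) (𝓝 (μ (ball x r))) :=
    ((hcont x r (mem_Ioi.mpr hr)).tendsto).comp h1
  have hsmall : Tendsto (fun y : X => μ (ball x (r - dist y x))) (𝓝 x) (𝓝 (μ (ball x r))) :=
    ((hcont x r (mem_Ioi.mpr hr)).tendsto).comp h2
  have hg : Tendsto (fun y : X => μ (ball x (r + dist y x)) - μ (ball x (r - dist y x)))
      (𝓝 x) (𝓝 0) := by
    simpa using ENNReal.Tendsto.sub hbig hsmall (Or.inl (hfin x r hr).ne)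
  refine tendsto_of_tendsto_of_tendsto_of_le_of_le tendsto_const_nhds hg
    (fun y => zero_le) (fun y => ?_)
  have hdy : (0:ℝ) ≤ dist y x := dist_nonneg
  have hsub : (ball x r \ ball y r) ∪ (ball y r \ ball x r) ⊆
      ball x (r + dist y x) \ ball x (r - dist y x) := by
    intro z hz
    have htri := dist_triangle z x y
    have htri2 := dist_triangle z y x
    have hc : dist x y = dist y x := dist_comm x y
    rcases hz with ⟨h1', h2'⟩ | ⟨h1', h2'⟩ <;>
      simp only [mem_ball, mem_diff, not_lt] at h1' h2' ⊢ <;>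
      constructor <;> linarith
  calc μ ((ball x r \ ball y r) ∪ (ball y r \ ball x r))
      ≤ μ (ball x (r + dist y x) \ ball x (r - dist y x)) := measure_mono hsub
    _ = μ (ball x (r + dist y x)) - μ (ball x (r - dist y x)) := by
        refine measure_diff (ball_subset_ball (by linarith))
          measurableSet_ball.nullMeasurableSet ?_
        exact ((measure_mono (ball_subset_ball (by linarith : r - dist y x ≤ r + dist y x))).trans_lt
          (hfin x (r + dist y x) (by linarith))).ne
end

section
/- Let X be a metric measure space with doubling measure μ (doubling constant C_μ), Ω ⊆ X open, and f ≥ 0 strongly harmonic in Ω. If B = B(x,r) is a ball with B(x,6r) ⋐ Ω, then sup_B f ≤ C_μ³ · inf_B f. -/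
open MeasureTheory Metric Set Filter

variable {X : Type*} [MetricSpace X] [MeasurableSpace X]

/-- A locally integrable function is strongly harmonic on an open set `Ω` if it satisfies
the mean value property for every ball compactly contained in `Ω`. -/
def StronglyHarmonicOn (μ : Measure X) (Ω : Set X) (f : X → ℝ) : Prop :=
  LocallyIntegrableOn f Ω μ ∧
    ∀ x ∈ Ω, ∀ r : ℝ, 0 < r → IsCompact (closure (ball x r)) → closure (ball x r) ⊆ Ω →
      f x = ⨍ y in ball x r, f y ∂μ

/-- Subharmonic: the value is at most the mean value over every ball compactly contained
in `Ω`. -/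
def SubharmonicMVOn (μ : Measure X) (Ω : Set X) (f : X → ℝ) : Prop :=
  LocallyIntegrableOn f Ω μ ∧
    ∀ x ∈ Ω, ∀ r : ℝ, 0 < r → IsCompact (closure (ball x r)) → closure (ball x r) ⊆ Ω →
      f x ≤ ⨍ y in ball x r, f y ∂μ

/-- Superharmonic: the value is at least the mean value over every ball compactly
contained in `Ω`. -/
def SuperharmonicMVOn (μ : Measure X) (Ω : Set X) (f : X → ℝ) : Prop :=
  LocallyIntegrableOn f Ω μ ∧
    ∀ x ∈ Ω, ∀ r : ℝ, 0 < r → IsCompact (closure (ball x r)) → closure (ball x r) ⊆ Ω →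
      ⨍ y in ball x r, f y ∂μ ≤ f x

/-- Harnack inequality on balls: if f ≥ 0 is strongly harmonic in Ω, μ is
doubling with constant C_μ, and B(x,6r) ⋐ Ω, then sup_{B(x,r)} f ≤ C_μ³ inf_{B(x,r)} f. -/
theorem harnack_on_balls (μ : Measure X) (Cμ : ℝ) (hCμ : 1 ≤ Cμ)
    (hdbl : ∀ (x : X) (r : ℝ), 0 < r →
      μ (ball x (2 * r)) ≤ ENNReal.ofReal Cμ * μ (ball x r))
    (Ω : Set X) (hΩ : IsOpen Ω) (f : X → ℝ) (hf : StronglyHarmonicOn μ Ω f)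
    (hpos : ∀ x ∈ Ω, 0 ≤ f x) (x : X) (r : ℝ) (hr : 0 < r)
    (hcpt : IsCompact (closure (ball x (6 * r)))) (hsub : closure (ball x (6 * r)) ⊆ Ω) :
    ∀ z ∈ ball x r, ∀ y ∈ ball x r, f z ≤ Cμ ^ 3 * f y := by

  intro z hz y hy
  obtain ⟨hint, hmvp⟩ := hf
  have hr3 : (0:ℝ) < 3 * r := by linarith
  -- basic ball inclusions
  have hzball : ball z r ⊆ ball x (6 * r) := by
    apply ball_subset_ball'
    have := mem_ball.mp hz; linarith
  have hyball : ball y (3 * r) ⊆ ball x (6 * r) := by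
    apply ball_subset_ball'
    have := mem_ball.mp hy; linarith
  have hzy : ball z r ⊆ ball y (3 * r) := by
    apply ball_subset_ball'
    have h1 := mem_ball.mp hz
    have h2 := mem_ball.mp hy
    have : dist z y ≤ dist z x + dist y x := dist_triangle_right z y x
    linarith
  have hyz : ball y (3 * r) ⊆ ball z (5 * r) := by
    apply ball_subset_ball'
    have h1 := mem_ball.mp hz
    have h2 := mem_ball.mp hy
    have : dist y z ≤ dist y x + dist z x := dist_triangle_right y z x
    linarith
  have hzΩ : z ∈ Ω := hsub (subset_closure (hzball (mem_ball_self hr)))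
  have hyΩ : y ∈ Ω := hsub (subset_closure (hyball (mem_ball_self hr3)))
  -- closures compactly contained
  have hclz : closure (ball z r) ⊆ closure (ball x (6 * r)) := closure_mono hzball
  have hcly : closure (ball y (3 * r)) ⊆ closure (ball x (6 * r)) := closure_mono hyball
  have hcptz : IsCompact (closure (ball z r)) :=
    hcpt.of_isClosed_subset isClosed_closure hclz
  have hcpty : IsCompact (closure (ball y (3 * r))) :=
    hcpt.of_isClosed_subset isClosed_closure hcly
  have hsubz : closure (ball z r) ⊆ Ω := hclz.trans hsub
  have hsuby : closure (ball y (3 * r)) ⊆ Ω := hcly.trans hsub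
  -- mean value properties
  have hfz : f z = ⨍ w in ball z r, f w ∂μ := hmvp z hzΩ r hr hcptz hsubz
  have hfy : f y = ⨍ w in ball y (3 * r), f w ∂μ := hmvp y hyΩ (3 * r) hr3 hcpty hsuby
  have hfy0 : 0 ≤ f y := hpos y hyΩ
  have hCμ0 : (0:ℝ) ≤ Cμ := by linarith
  have hCμ3 : (1:ℝ) ≤ Cμ ^ 3 := one_le_pow₀ hCμ
  rw [hfz, setAverage_eq, measureReal_def]
  set a := μ (ball z r) with ha
  by_cases hA : a.toReal = 0
  · rw [hA]
    simp only [inv_zero, smul_eq_mul, zero_mul]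
    positivity
  · have haT : 0 < a.toReal := lt_of_le_of_ne ENNReal.toReal_nonneg (Ne.symm hA)
    have ha0 : a ≠ 0 := by
      intro h; rw [h] at haT; simp at haT
    have hatop : a ≠ ⊤ := by
      intro h; rw [h] at haT; simp at haT
    -- doubling chain
    have hd1 : μ (ball z (8 * r)) ≤ ENNReal.ofReal Cμ * μ (ball z (4 * r)) := by
      have := hdbl z (4 * r) (by linarith)
      rwa [show (2:ℝ) * (4 * r) = 8 * r by ring] at this
    have hd2 : μ (ball z (4 * r)) ≤ ENNReal.ofReal Cμ * μ (ball z (2 * r)) := by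
      have := hdbl z (2 * r) (by linarith)
      rwa [show (2:ℝ) * (2 * r) = 4 * r by ring] at this
    have hd3 : μ (ball z (2 * r)) ≤ ENNReal.ofReal Cμ * a := by
      simpa using hdbl z r hr
    have hchain : μ (ball y (3 * r)) ≤ ENNReal.ofReal Cμ ^ 3 * a := by
      calc μ (ball y (3 * r)) ≤ μ (ball z (8 * r)) :=
            measure_mono (hyz.trans (ball_subset_ball (by linarith)))
        _ ≤ ENNReal.ofReal Cμ * μ (ball z (4 * r)) := hd1
        _ ≤ ENNReal.ofReal Cμ * (ENNReal.ofReal Cμ * μ (ball z (2 * r))) :=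
            mul_le_mul_right hd2 _
        _ ≤ ENNReal.ofReal Cμ * (ENNReal.ofReal Cμ * (ENNReal.ofReal Cμ * a)) :=
            mul_le_mul_right (mul_le_mul_right hd3 _) _
        _ = ENNReal.ofReal Cμ ^ 3 * a := by ring
    set b := μ (ball y (3 * r)) with hb
    have hbtop : b ≠ ⊤ := by
      intro h
      rw [h] at hchain
      exact (ENNReal.mul_ne_top (by simp [ENNReal.pow_ne_top]) hatop)
        (top_le_iff.mp hchain)
    have hbT : b.toReal ≤ Cμ ^ 3 * a.toReal := by
      have := ENNReal.toReal_mono (by exact ENNReal.mul_ne_top (by simp) hatop) hchain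
      rwa [ENNReal.toReal_mul, ENNReal.toReal_pow, ENNReal.toReal_ofReal hCμ0] at this
    -- integrability on the big ball
    have hintb : IntegrableOn f (ball y (3 * r)) μ := by
      have : IntegrableOn f (closure (ball y (3 * r))) μ :=
        hint.integrableOn_compact_subset hsuby hcpty
      exact this.mono_set subset_closure
    have hnn : 0 ≤ᵐ[μ.restrict (ball y (3 * r))] f := by
      obtain ⟨g, hg, hfg⟩ := hintb.1
      have hgset : NullMeasurableSet {w | ¬ (0:ℝ) ≤ f w} (μ.restrict (ball y (3 * r))) := by
        refine NullMeasurableSet.congr (s := {w | ¬ (0:ℝ) ≤ g w}) ?_ ?_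
        · have : MeasurableSet {w | g w < 0} := hg.measurable measurableSet_Iio
          simpa [not_le] using this.nullMeasurableSet
        · filter_upwards [hfg] with w hw
          show (¬ (0:ℝ) ≤ g w) = (¬ (0:ℝ) ≤ f w)
          rw [hw]
      rw [EventuallyLE, ae_iff]
      simp only [Pi.zero_apply]
      rw [Measure.restrict_apply₀ hgset]
      apply measure_mono_null (t := (∅ : Set X)) _ measure_empty
      rintro w ⟨hw1, hw2⟩
      exact hw1 (hpos w (hsub (subset_closure (hyball hw2))))
    have hmono : ∫ w in ball z r, f w ∂μ ≤ ∫ w in ball y (3 * r), f w ∂μ :=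
      setIntegral_mono_set hintb hnn (HasSubset.Subset.eventuallyLE hzy)
    have hbpos : 0 < b.toReal :=
      lt_of_lt_of_le haT (ENNReal.toReal_mono hbtop (measure_mono hzy))
    have hIy : ∫ w in ball y (3 * r), f w ∂μ = b.toReal * f y := by
      rw [hfy, setAverage_eq, measureReal_def, smul_eq_mul, ← mul_assoc,
        mul_inv_cancel₀ hbpos.ne', one_mul]
    rw [smul_eq_mul]
    calc a.toReal⁻¹ * ∫ w in ball z r, f w ∂μ
        ≤ a.toReal⁻¹ * ∫ w in ball y (3 * r), f w ∂μ :=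
          mul_le_mul_of_nonneg_left hmono (by positivity)
      _ = a.toReal⁻¹ * (b.toReal * f y) := by rw [hIy]
      _ ≤ Cμ ^ 3 * f y := by
          rw [inv_mul_le_iff₀ haT]
          nlinarith [mul_le_mul_of_nonneg_right hbT hfy0]
end

section
/- Let Ω be a bounded domain in a proper metric measure space X and f strongly harmonic in Ω and continuous on the closure of Ω. Then inf_{∂Ω} f ≤ inf_{cl Ω} f and sup_{cl Ω} f ≤ sup_{∂Ω} f. -/
open MeasureTheory Metric Set Filter Topology

variable {X : Type*} [MetricSpace X] [MeasurableSpace X]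

private lemma exists_good_ball [ProperSpace X] {Ω : Set X} (hΩ : IsOpen Ω) {x : X} (hx : x ∈ Ω) :
    ∃ r > 0, IsCompact (closure (ball x r)) ∧ closure (ball x r) ⊆ Ω ∧ ball x r ⊆ Ω := by
  obtain ⟨ε, hε, hball⟩ := Metric.isOpen_iff.mp hΩ x hx
  refine ⟨ε/2, by positivity, ?_, ?_, ?_⟩
  · exact (isCompact_closedBall x (ε/2)).of_isClosed_subset isClosed_closure
      closure_ball_subset_closedBall
  · exact (closure_ball_subset_closedBall.trans (closedBall_subset_ball (by linarith))).trans hball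
  · exact (ball_subset_ball (by linarith)).trans hball

private lemma ball_zero_of_ball_zero {μ : Measure X} {Cμ : ℝ}
    (hdbl : ∀ (x : X) (r : ℝ), 0 < r →
      μ (ball x (2 * r)) ≤ ENNReal.ofReal Cμ * μ (ball x r))
    {x : X} {r : ℝ} (hr : 0 < r) (h0 : μ (ball x r) = 0) :
    ∀ (y : X) (s : ℝ), μ (ball y s) = 0 := by
  have key : ∀ n : ℕ, μ (ball x (2 ^ n * r)) = 0 := by
    intro n; induction n with
    | zero => simpa using h0
    | succ n ih =>
      have h2 : (2:ℝ) ^ (n+1) * r = 2 * (2 ^ n * r) := by ring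
      rw [h2]
      have := hdbl x (2 ^ n * r) (by positivity)
      simp only [ih, mul_zero, nonpos_iff_eq_zero] at this
      exact this
  intro y s
  obtain ⟨n, hn⟩ : ∃ n : ℕ, (s + dist y x) / r < 2 ^ n :=
    pow_unbounded_of_one_lt _ one_lt_two
  have hsub : ball y s ⊆ ball x (2 ^ n * r) :=
    ball_subset_ball' (by rw [div_lt_iff₀ hr] at hn; linarith)
  exact le_antisymm ((measure_mono hsub).trans (key n).le) zero_le

private lemma ball_top_of_ball_top {μ : Measure X} {Cμ : ℝ}
    (hdbl : ∀ (x : X) (r : ℝ), 0 < r →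
      μ (ball x (2 * r)) ≤ ENNReal.ofReal Cμ * μ (ball x r))
    {x : X} {r : ℝ} (htop : μ (ball x r) = ⊤) :
    ∀ (y : X) (s : ℝ), 0 < s → μ (ball y s) = ⊤ := by
  intro y s hs
  by_contra hfin
  have key : ∀ n : ℕ, μ (ball y (2 ^ n * s)) ≠ ⊤ := by
    intro n; induction n with
    | zero => simpa using hfin
    | succ n ih =>
      have h2 : (2:ℝ) ^ (n+1) * s = 2 * (2 ^ n * s) := by ring
      rw [h2]
      exact fun h => ((h ▸ hdbl y (2 ^ n * s) (by positivity)).trans_lt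
        (ENNReal.mul_lt_top ENNReal.ofReal_lt_top ih.lt_top)).ne rfl
  obtain ⟨n, hn⟩ : ∃ n : ℕ, (r + dist x y) / s < 2 ^ n :=
    pow_unbounded_of_one_lt _ one_lt_two
  have hsub : ball x r ⊆ ball y (2 ^ n * s) :=
    ball_subset_ball' (by rw [div_lt_iff₀ hs] at hn; linarith)
  exact key n (top_le_iff.mp (htop ▸ measure_mono hsub))

private lemma eq_on_closure_of_eqOn {f : X → ℝ} {Ω : Set X} {c : ℝ}
    (hc : ContinuousOn f (closure Ω)) (h : ∀ x ∈ Ω, f x = c) :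
    ∀ x ∈ closure Ω, f x = c := by
  intro z hz
  have h1 : Tendsto f (𝓝[Ω] z) (𝓝 (f z)) :=
    (hc z hz).mono_left (nhdsWithin_mono _ subset_closure)
  have h2 : Tendsto f (𝓝[Ω] z) (𝓝 c) := by
    refine Tendsto.congr' ?_ tendsto_const_nhds
    filter_upwards [self_mem_nhdsWithin] with y hy using (h y hy).symm
  have : (𝓝[Ω] z).NeBot := mem_closure_iff_nhdsWithin_neBot.mp hz
  exact tendsto_nhds_unique h1 h2

/-- If `f` is integrable on `B` (w.r.t. a possibly non-Borel σ-algebra) and `f ≤ M`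
pointwise on `B`, then `f ≤ M` almost everywhere for `μ.restrict B`. -/
private lemma ae_le_of_le_on {μ : Measure X} {B : Set X} {f : X → ℝ} {M : ℝ}
    (hint : AEStronglyMeasurable f (μ.restrict B))
    (hle : ∀ y ∈ B, f y ≤ M) :
    ∀ᵐ y ∂(μ.restrict B), f y ≤ M := by
  obtain ⟨φ, hφm, hφae⟩ := hint
  set ν := μ.restrict B
  have h4 : ν {y | f y ≠ φ y} = 0 := ae_iff.mp hφae
  have hW : ν {y | M < φ y} = 0 := by
    have hWm : MeasurableSet {y | M < φ y} := measurableSet_lt measurable_const hφm.measurable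
    have h1 : ν {y | M < φ y} = μ ({y | M < φ y} ∩ B) := Measure.restrict_apply hWm
    have h2 : μ ({y | M < φ y} ∩ B) = ν ({y | M < φ y} ∩ B) :=
      (Measure.restrict_eq_self μ inter_subset_right).symm
    have h3 : {y | M < φ y} ∩ B ⊆ {y | f y ≠ φ y} := by
      rintro y ⟨hy1, hy2⟩
      intro h
      rw [Set.mem_setOf_eq] at hy1
      rw [← h] at hy1
      exact absurd (hle y hy2) (not_le.mpr hy1)
    rw [h1, h2]
    exact le_antisymm ((measure_mono h3).trans h4.le) zero_le
  have hsub : {y | ¬ f y ≤ M} ⊆ {y | M < φ y} ∪ {y | f y ≠ φ y} := by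
    intro y hy
    by_cases h : f y = φ y
    · refine Or.inl ?_
      rw [Set.mem_setOf_eq, ← h]
      exact not_le.mp hy
    · exact Or.inr h
  rw [ae_iff]
  exact le_antisymm (le_trans (measure_mono hsub)
    (le_trans (measure_union_le _ _) (by rw [hW, h4]; simp))) zero_le

private lemma sup_lemma [ProperSpace X] (μ : Measure X)
    (hpos : ∀ (y : X) (s : ℝ), 0 < s → 0 < μ (ball y s) ∧ μ (ball y s) < ⊤)
    (Ω : Set X) (hΩ : IsOpen Ω) (hconn : IsConnected Ω)
    (hbdd : Bornology.IsBounded Ω) (hne : (frontier Ω).Nonempty)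
    (f : X → ℝ) (hf : LocallyIntegrableOn f Ω μ)
    (hmv : ∀ x ∈ Ω, ∀ r : ℝ, 0 < r → IsCompact (closure (ball x r)) →
      closure (ball x r) ⊆ Ω → f x = ⨍ y in ball x r, f y ∂μ)
    (hc : ContinuousOn f (closure Ω)) :
    ∀ x ∈ closure Ω, f x ≤ sSup (f '' frontier Ω) := by
  intro x hx
  have hK : IsCompact (closure Ω) := isCompact_of_isClosed_isBounded isClosed_closure hbdd.closure
  have hfrc : frontier Ω ⊆ closure Ω := frontier_subset_closure
  have hfrcpt : IsCompact (frontier Ω) := hK.of_isClosed_subset isClosed_frontier hfrc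
  have hbdda : BddAbove (f '' frontier Ω) := hfrcpt.bddAbove_image (hc.mono hfrc)
  obtain ⟨x₀, hx₀K, hmax⟩ := hK.exists_isMaxOn ⟨x, hx⟩ hc
  set M := f x₀ with hM
  suffices h : ∃ z ∈ frontier Ω, f z = M by
    obtain ⟨z, hz, hfz⟩ := h
    refine (hmax hx).trans ?_
    have : M ∈ f '' frontier Ω := ⟨z, hz, hfz⟩
    exact le_csSup hbdda this
  by_cases hx₀ : x₀ ∈ frontier Ω
  · exact ⟨x₀, hx₀, rfl⟩
  have hx₀Ω : x₀ ∈ Ω := by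
    rcases (closure_eq_self_union_frontier Ω ▸ hx₀K : x₀ ∈ Ω ∪ frontier Ω) with h | h
    · exact h
    · exact absurd h hx₀
  have hcΩ : ContinuousOn f Ω := hc.mono subset_closure
  -- key openness claim
  have hopen : ∀ x₁ ∈ Ω, f x₁ = M → ∃ r > 0, ball x₁ r ⊆ Ω ∧ ∀ y ∈ ball x₁ r, f y = M := by
    intro x₁ hx₁ hfx₁
    obtain ⟨r, hr, hcpt, hclsub, hbsub⟩ := exists_good_ball hΩ hx₁
    refine ⟨r, hr, hbsub, ?_⟩
    set B := ball x₁ r with hB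
    set ν := μ.restrict B with hν
    have hμBpos : 0 < μ B := (hpos x₁ r hr).1
    have hμBfin : μ B ≠ ⊤ := (hpos x₁ r hr).2.ne
    have hμB0 : (μ B).toReal ≠ 0 := ENNReal.toReal_ne_zero.mpr ⟨hμBpos.ne', hμBfin⟩
    have hintf : IntegrableOn f B μ :=
      (hf.integrableOn_compact_subset hclsub hcpt).mono_set subset_closure
    have havg : f x₁ = (μ B).toReal⁻¹ • ∫ y in B, f y ∂μ := by
      rw [hmv x₁ hx₁ r hr hcpt hclsub, setAverage_eq, measureReal_def]
    have hintval : ∫ y in B, f y ∂μ = (μ B).toReal * M := by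
      rw [hfx₁] at havg
      rw [smul_eq_mul] at havg
      field_simp at havg
      linarith
    have hintc : IntegrableOn (fun _ => M) B μ :=
      integrableOn_const hμBfin
    have hsub0 : ∫ y in B, (M - f y) ∂μ = 0 := by
      rw [integral_sub hintc hintf, hintval, setIntegral_const, smul_eq_mul, measureReal_def, sub_self]
    have hge : 0 ≤ᵐ[ν] fun y => M - f y := by
      have := ae_le_of_le_on (μ := μ) (B := B) (f := f) (M := M)
        hintf.aestronglyMeasurable (fun y hy => hmax (subset_closure (hbsub hy)))
      filter_upwards [this] with y hy
      simpa using hy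
    have hae : (fun y => M - f y) =ᵐ[ν] 0 :=
      (integral_eq_zero_iff_of_nonneg_ae hge (hintc.sub hintf)).mp hsub0
    have hnull : ν {y | f y ≠ M} = 0 := by
      have h1 := ae_iff.mp hae
      refine le_antisymm (le_trans (measure_mono ?_) h1.le) zero_le
      intro y hy
      simp only [Set.mem_setOf_eq, Pi.zero_apply] at hy ⊢
      exact fun h => hy (by linarith [sub_eq_zero.mp h])
    intro y hy
    by_contra hne'
    have hNopen : IsOpen (B ∩ f ⁻¹' {M}ᶜ) := by
      have h1 : IsOpen (Ω ∩ f ⁻¹' {M}ᶜ) :=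
        hcΩ.isOpen_inter_preimage hΩ (isOpen_compl_singleton)
      have h2 : IsOpen (B ∩ (Ω ∩ f ⁻¹' {M}ᶜ)) := isOpen_ball.inter h1
      have h3 : B ∩ (Ω ∩ f ⁻¹' {M}ᶜ) = B ∩ f ⁻¹' {M}ᶜ := by
        ext w
        constructor
        · rintro ⟨hw1, _, hw3⟩; exact ⟨hw1, hw3⟩
        · rintro ⟨hw1, hw3⟩; exact ⟨hw1, hbsub hw1, hw3⟩
      rwa [h3] at h2
    obtain ⟨δ, hδ, hball⟩ := Metric.isOpen_iff.mp hNopen y ⟨hy, hne'⟩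
    have hδB : ball y δ ⊆ B := fun w hw => (hball hw).1
    have hz : μ (ball y δ) = 0 := by
      have e1 : μ (ball y δ) = ν (ball y δ) := (Measure.restrict_eq_self μ hδB).symm
      have e2 : ball y δ ⊆ {y | f y ≠ M} := by
        intro w hw
        have := (hball hw).2
        simpa using this
      rw [e1]
      exact le_antisymm ((measure_mono e2).trans hnull.le) zero_le
    exact absurd hz (hpos y δ hδ).1.ne'
  -- connectedness argument
  have hall : ∀ y ∈ Ω, f y = M := by
    by_contra hcon
    push_neg at hcon
    obtain ⟨y₁, hy₁, hfy₁⟩ := hcon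
    set u : Set X := ⋃ (p : {p : X // p ∈ Ω ∧ f p = M}), ball p.1
      (Classical.choose (hopen p.1 p.2.1 p.2.2)) with hu
    have huopen : IsOpen u := isOpen_iUnion fun p => isOpen_ball
    have huM : ∀ w ∈ u, f w = M := by
      intro w hw
      obtain ⟨p, hp⟩ := mem_iUnion.mp hw
      exact (Classical.choose_spec (hopen p.1 p.2.1 p.2.2)).2.2 w hp
    have hmemu : ∀ p, (hp : p ∈ Ω) → (hfp : f p = M) → p ∈ u := by
      intro p hp hfp
      exact mem_iUnion.mpr ⟨⟨p, hp, hfp⟩,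
        mem_ball_self (Classical.choose_spec (hopen p hp hfp)).1⟩
    have hvopen : IsOpen (Ω ∩ f ⁻¹' {M}ᶜ) :=
      hcΩ.isOpen_inter_preimage hΩ (isOpen_compl_singleton)
    obtain ⟨w, _, hwu, hwv⟩ :=
      hconn.isPreconnected u (Ω ∩ f ⁻¹' {M}ᶜ) huopen hvopen
        (fun y hy => by
          by_cases h : f y = M
          · exact Or.inl (hmemu y hy h)
          · exact Or.inr ⟨hy, by simpa using h⟩)
        ⟨x₀, hx₀Ω, hmemu x₀ hx₀Ω rfl⟩ ⟨y₁, hy₁, hy₁, by simpa using hfy₁⟩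
    have : f w = M := huM w hwu
    simp only [mem_inter_iff, mem_preimage, mem_compl_iff, mem_singleton_iff] at hwv
    exact hwv.2 this
  obtain ⟨z, hz⟩ := hne
  exact ⟨z, hz, eq_on_closure_of_eqOn hc hall z (hfrc hz)⟩

private lemma neg_loc {μ : Measure X} {Ω : Set X} {f : X → ℝ}
    (hf : LocallyIntegrableOn f Ω μ) : LocallyIntegrableOn (fun y => -f y) Ω μ := by
  intro x hx
  obtain ⟨t, ht, hint⟩ := hf x hx
  exact ⟨t, ht, hint.neg⟩

/-- Weak maximum principle on a bounded domain: for f strongly harmonic in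
Ω and continuous on the closure, inf_{∂Ω} f ≤ inf_{cl Ω} f and sup_{cl Ω} f ≤ sup_{∂Ω} f. -/
theorem weak_maximum_principle [ProperSpace X] (μ : Measure X) (Cμ : ℝ)
    (hdbl : ∀ (x : X) (r : ℝ), 0 < r →
      μ (ball x (2 * r)) ≤ ENNReal.ofReal Cμ * μ (ball x r))
    (Ω : Set X) (hΩ : IsOpen Ω) (hconn : IsConnected Ω)
    (hbdd : Bornology.IsBounded Ω) (hne : (frontier Ω).Nonempty)
    (f : X → ℝ) (hf : StronglyHarmonicOn μ Ω f) (hc : ContinuousOn f (closure Ω)) :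
    ∀ x ∈ closure Ω, sInf (f '' frontier Ω) ≤ f x ∧ f x ≤ sSup (f '' frontier Ω) := by
  by_cases hP : ∀ (y : X) (s : ℝ), 0 < s → 0 < μ (ball y s) ∧ μ (ball y s) < ⊤
  · intro x hx
    constructor
    · have hneg := sup_lemma μ hP Ω hΩ hconn hbdd hne (fun y => -f y) (neg_loc hf.1)
        (fun x hx r hr hk hs => by
          show -f x = ⨍ y in ball x r, -f y ∂μ
          rw [hf.2 x hx r hr hk hs, setAverage_eq, setAverage_eq, integral_neg, smul_neg])
        hc.neg x hx
      have himg : (fun y => -f y) '' frontier Ω = -(f '' frontier Ω) := by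
        rw [← Set.image_neg_eq_neg, ← Set.image_image]
      rw [himg] at hneg
      rw [Real.sInf_def, neg_le]
      exact hneg
    · exact sup_lemma μ hP Ω hΩ hconn hbdd hne f hf.1 hf.2 hc x hx
  · -- degenerate case: some ball has measure 0 or ∞, hence every ball does, and f ≡ 0 on Ω
    push_neg at hP
    obtain ⟨y, s, hs, hys⟩ := hP
    have hall : ∀ (z : X) (t : ℝ), 0 < t → (μ (ball z t)).toReal = 0 := by
      rcases eq_or_ne (μ (ball y s)) 0 with h0 | h0
      · intro z t _
        rw [ball_zero_of_ball_zero hdbl hs h0 z t]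
        simp
      · have htop : μ (ball y s) = ⊤ :=
          top_le_iff.mp (hys (pos_iff_ne_zero.mpr h0))
        intro z t ht
        rw [ball_top_of_ball_top hdbl htop z t ht]
        simp
    have hzero : ∀ x ∈ Ω, f x = 0 := by
      intro x hx
      obtain ⟨r, hr, hcpt, hclsub, _⟩ := exists_good_ball hΩ hx
      rw [hf.2 x hx r hr hcpt hclsub, setAverage_eq, measureReal_def, hall x r hr]
      simp
    have hcl : ∀ x ∈ closure Ω, f x = 0 := eq_on_closure_of_eqOn hc hzero
    intro x hx
    obtain ⟨z, hz⟩ := hne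
    have himg : f '' frontier Ω = {0} := by
      apply Subset.antisymm
      · rintro t ⟨w, hw, rfl⟩
        simp [hcl w (frontier_subset_closure hw)]
      · rintro t ht
        simp only [mem_singleton_iff] at ht
        exact ⟨z, hz, by rw [hcl z (frontier_subset_closure hz), ht]⟩
    rw [himg, hcl x hx]
    simp
end

section
/- Let (X,d,μ) be a doubling metric measure space satisfying the δ-annular decay property with constant A ≥ 1 and δ ∈ (0,1]. Let f be strongly harmonic and bounded with |f| ≤ M on B(x,2r), where B(x,2r) ⋐ Ω. Then for all x, y with d(x,y) < r/2, |f(x) − f(y)| ≤ 2·3^δ M C_μ³ A (d(x,y)/r)^δ. -/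
open MeasureTheory Metric Set Filter

variable {X : Type*} [MetricSpace X] [MeasurableSpace X]

set_option maxHeartbeats 1000000 in
/-- Hölder estimate under the δ-annular decay property: if |f| ≤ M on
B(x,2r) ⋐ Ω and d(x,y) < r/2 then |f(x) − f(y)| ≤ 2·3^δ M C_μ³ A (d(x,y)/r)^δ. -/
theorem holder_of_annular_decay (μ : Measure X) (Cμ A δ : ℝ) (hCμ : 1 ≤ Cμ)
    (hA : 1 ≤ A) (hδ : δ ∈ Ioc (0:ℝ) 1)
    (hdbl : ∀ (x : X) (r : ℝ), 0 < r →
      μ (ball x (2 * r)) ≤ ENNReal.ofReal Cμ * μ (ball x r))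
    (hann : ∀ (x : X) (r ε : ℝ), 0 < r → ε ∈ Ioo (0:ℝ) 1 →
      μ (ball x r \ ball x (r * (1 - ε))) ≤ ENNReal.ofReal (A * ε ^ δ) * μ (ball x r))
    (Ω : Set X) (hΩ : IsOpen Ω) (f : X → ℝ) (hf : StronglyHarmonicOn μ Ω f)
    (x : X) (r M : ℝ) (hr : 0 < r)
    (hcpt : IsCompact (closure (ball x (2 * r)))) (hsub : closure (ball x (2 * r)) ⊆ Ω)
    (hM : ∀ z ∈ ball x (2 * r), |f z| ≤ M) :
    ∀ y : X, dist x y < r / 2 →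
      |f x - f y| ≤ 2 * 3 ^ δ * M * Cμ ^ 3 * A * (dist x y / r) ^ δ := by
  
  intro y hy
  set d := dist x y with hd
  have hd0 : 0 ≤ d := dist_nonneg
  have hxS : x ∈ ball x (2 * r) := mem_ball_self (by linarith)
  have hM0 : 0 ≤ M := (abs_nonneg _).trans (hM x hxS)
  have hA0 : (0:ℝ) < A := lt_of_lt_of_le one_pos hA
  have hCμ0 : (0:ℝ) < Cμ := lt_of_lt_of_le one_pos hCμ
  have hdr0 : 0 ≤ d / r := div_nonneg hd0 hr.le
  have hRHS0 : 0 ≤ 2 * 3 ^ δ * M * Cμ ^ 3 * A * (d / r) ^ δ := by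
    have h3 : (0:ℝ) ≤ 3 ^ δ := (Real.rpow_pos_of_pos (by norm_num) δ).le
    have ht : (0:ℝ) ≤ (d / r) ^ δ := Real.rpow_nonneg hdr0 δ
    have hC3 : (0:ℝ) ≤ Cμ ^ 3 := by positivity
    nlinarith [mul_nonneg (mul_nonneg (mul_nonneg (mul_nonneg (by linarith : (0:ℝ) ≤ 2 * 3 ^ δ) hM0) hC3) hA0.le) ht]
  rcases eq_or_lt_of_le hd0 with h0 | hdpos
  · have hxy : x = y := eq_of_dist_eq_zero h0.symm
    rw [← hxy]
    simpa using hRHS0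
  -- main case: d > 0
  have hrd : 0 < r - d := by
    have : d < r / 2 := hy
    linarith
  set Bx := ball x r with hBx
  set By := ball y (r - d) with hBy
  have hByBx : By ⊆ Bx := by
    intro z hz
    have hz' : dist z y < r - d := mem_ball.1 hz
    have : dist z x ≤ dist z y + dist y x := dist_triangle z y x
    rw [dist_comm y x] at this
    exact mem_ball.2 (by simp only [← hd] at this ⊢; linarith)
  have hBx2 : Bx ⊆ ball x (2 * r) := ball_subset_ball (by linarith)
  have hcpt1 : IsCompact (closure Bx) :=
    hcpt.of_isClosed_subset isClosed_closure (closure_mono hBx2)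
  have hsub1 : closure Bx ⊆ Ω := (closure_mono hBx2).trans hsub
  have hx_mem : x ∈ Ω := hsub (subset_closure hxS)
  have hyS : y ∈ ball x (2 * r) := mem_ball.2 (by rw [dist_comm]; simp only [← hd]; linarith)
  have hy_mem : y ∈ Ω := hsub (subset_closure hyS)
  have hcpt2 : IsCompact (closure By) :=
    hcpt1.of_isClosed_subset isClosed_closure (closure_mono hByBx)
  have hsub2 : closure By ⊆ Ω := (closure_mono hByBx).trans hsub1
  have hfx : f x = ⨍ z in Bx, f z ∂μ := hf.2 x hx_mem r hr hcpt1 hsub1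
  have hfy : f y = ⨍ z in By, f z ∂μ := hf.2 y hy_mem (r - d) hrd hcpt2 hsub2
  -- measures of the two balls
  set a := μ Bx with ha
  set b := μ By with hb
  have hba : b ≤ a := measure_mono hByBx
  -- doubling comparison: a ≤ Cμ² b
  have hxy4 : Bx ⊆ ball y (2 * (2 * (r - d))) := by
    intro z hz
    have hz' : dist z x < r := mem_ball.1 hz
    have : dist z y ≤ dist z x + dist x y := dist_triangle z x y
    refine mem_ball.2 ?_
    have hy2 : d < r / 2 := hy
    simp only [← hd] at this
    linarith
  have hab2 : a ≤ ENNReal.ofReal Cμ * (ENNReal.ofReal Cμ * b) := by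
    calc a ≤ μ (ball y (2 * (2 * (r - d)))) := measure_mono hxy4
      _ ≤ ENNReal.ofReal Cμ * μ (ball y (2 * (r - d))) := hdbl y (2 * (r - d)) (by linarith)
      _ ≤ ENNReal.ofReal Cμ * (ENNReal.ofReal Cμ * b) :=
          mul_le_mul_right (hdbl y (r - d) hrd) _
  rcases eq_or_ne a 0 with ha0 | ha0
  · have hb0 : b = 0 := le_antisymm (hba.trans ha0.le) (zero_le)
    have hfx0 : f x = 0 := by rw [hfx, setAverage_eq, measureReal_def, ← ha, ha0]; simp
    have hfy0 : f y = 0 := by rw [hfy, setAverage_eq, measureReal_def, ← hb, hb0]; simp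
    rw [hfx0, hfy0]; simpa using hRHS0
  rcases eq_or_ne a ⊤ with haT | haT
  · have hbT : b = ⊤ := by
      by_contra hbT
      have : ENNReal.ofReal Cμ * (ENNReal.ofReal Cμ * b) < ⊤ :=
        ENNReal.mul_lt_top ENNReal.ofReal_lt_top
          (ENNReal.mul_lt_top ENNReal.ofReal_lt_top (lt_top_iff_ne_top.2 hbT))
      exact lt_irrefl ⊤ (lt_of_le_of_lt (haT ▸ hab2) this)
    have hfx0 : f x = 0 := by rw [hfx, setAverage_eq, measureReal_def, ← ha, haT]; simp
    have hfy0 : f y = 0 := by rw [hfy, setAverage_eq, measureReal_def, ← hb, hbT]; simp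
    rw [hfx0, hfy0]; simpa using hRHS0
  -- main case: 0 < a < ∞
  have hb0 : b ≠ 0 := by
    intro hb0
    rw [hb0, mul_zero, mul_zero] at hab2
    exact ha0 (le_antisymm hab2 (zero_le))
  have hbT : b ≠ ⊤ := fun h => haT (top_le_iff.1 (h ▸ hba))
  set a' := a.toReal with ha'
  set b' := b.toReal with hb'
  have ha'pos : 0 < a' := ENNReal.toReal_pos ha0 haT
  have hb'pos : 0 < b' := ENNReal.toReal_pos hb0 hbT
  -- integrability
  have hInt : IntegrableOn f Bx μ :=
    (hf.1.integrableOn_compact_subset hsub1 hcpt1).mono_set subset_closure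
  have hIntx : Integrable f (μ.restrict Bx) := hInt
  haveI : IsFiniteMeasure (μ.restrict By) :=
    ⟨by rw [Measure.restrict_apply_univ]; exact lt_top_iff_ne_top.2 hbT⟩
  set ν := μ.restrict Bx - μ.restrict By with hν
  have hrle : μ.restrict By ≤ μ.restrict Bx := Measure.restrict_mono hByBx le_rfl
  have hdecomp : ν + μ.restrict By = μ.restrict Bx := Measure.sub_add_cancel_of_le hrle
  have hν_le : ν ≤ μ.restrict Bx := Measure.sub_le
  have hIntν : Integrable f ν := hIntx.mono_measure hν_le
  have hInty : Integrable f (μ.restrict By) := hIntx.mono_measure hrle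
  have hI : ∫ z in Bx, f z ∂μ = (∫ z, f z ∂ν) + ∫ z in By, f z ∂μ := by
    rw [← integral_add_measure hIntν hInty, hdecomp]
  have hνuniv : ν univ + b = a := by
    have := congrArg (fun m : Measure X => m univ) hdecomp
    simpa [Measure.add_apply, Measure.restrict_apply_univ] using this
  have hνT : ν univ ≠ ⊤ := by
    intro h
    rw [h] at hνuniv
    exact haT (by simpa using hνuniv.symm)
  set c := (ν univ).toReal with hc
  have hc0 : 0 ≤ c := ENNReal.toReal_nonneg
  have habc : a' = c + b' := by
    rw [ha', ← hνuniv, ENNReal.toReal_add hνT hbT]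
  -- a.e. bound |f| ≤ M on restriction to Bx
  have hae : ∀ᵐ z ∂μ.restrict Bx, |f z| ≤ M := by
    rw [ae_iff]
    have hnm : NullMeasurableSet {z | ¬ |f z| ≤ M} (μ.restrict Bx) := by
      have hmf : AEMeasurable f (μ.restrict Bx) := hIntx.aemeasurable
      have hset : {z | ¬ |f z| ≤ M} = f ⁻¹' {t : ℝ | M < |t|} := by
        ext z; simp [not_le]
      rw [hset]
      exact hmf.nullMeasurable (measurableSet_lt measurable_const continuous_abs.measurable)
    rw [Measure.restrict_apply₀ hnm]
    have hempty : {z | ¬ |f z| ≤ M} ∩ Bx = ∅ := by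
      ext z
      simp only [mem_inter_iff, mem_setOf_eq, mem_empty_iff_false, iff_false, not_and]
      intro hnz hz
      exact hnz (hM z (hBx2 hz))
    rw [hempty, measure_empty]
  have hae_ν : ∀ᵐ z ∂ν, |f z| ≤ M :=
    Filter.Eventually.filter_mono (ae_mono hν_le) hae
  haveI : IsFiniteMeasure ν :=
    ⟨lt_top_iff_ne_top.2 hνT⟩
  have hKν : |∫ z, f z ∂ν| ≤ M * c := by
    have := norm_integral_le_of_norm_le_const (μ := ν) (f := f) (C := M)
      (by simpa [Real.norm_eq_abs] using hae_ν)
    simpa [Real.norm_eq_abs, hc, measureReal_def] using this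
  -- relations between averages and integrals
  have hfxE : a' * f x = ∫ z in Bx, f z ∂μ := by
    rw [hfx, setAverage_eq, smul_eq_mul, measureReal_def, ← ha', ← mul_assoc, mul_inv_cancel₀ ha'pos.ne', one_mul]
  have hfyE : b' * f y = ∫ z in By, f z ∂μ := by
    rw [hfy, setAverage_eq, smul_eq_mul, measureReal_def, ← hb', ← mul_assoc, mul_inv_cancel₀ hb'pos.ne', one_mul]
  have key : a' * (f x - f y) = (∫ z, f z ∂ν) - c * f y := by
    have : a' * f x = (∫ z, f z ∂ν) + b' * f y := by rw [hfxE, hI, hfyE]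
    calc a' * (f x - f y) = a' * f x - a' * f y := by ring
      _ = ((∫ z, f z ∂ν) + b' * f y) - (c + b') * f y := by rw [this, habc]
      _ = (∫ z, f z ∂ν) - c * f y := by ring
  have hfyM : |f y| ≤ M := hM y hyS
  have habs : a' * |f x - f y| ≤ 2 * M * c := by
    have h1 : a' * |f x - f y| = |a' * (f x - f y)| := by
      rw [abs_mul, abs_of_pos ha'pos]
    rw [h1, key]
    calc |(∫ z, f z ∂ν) - c * f y| ≤ |∫ z, f z ∂ν| + |c * f y| := abs_sub _ _
      _ ≤ M * c + c * M := by
          refine add_le_add hKν ?_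
          rw [abs_mul, abs_of_nonneg hc0]
          exact mul_le_mul_of_nonneg_left hfyM hc0
      _ = 2 * M * c := by ring
  -- annular decay bound on c
  set ε := 2 * d / r with hε
  have hεIoo : ε ∈ Ioo (0:ℝ) 1 := by
    constructor
    · exact div_pos (by linarith) hr
    · rw [div_lt_one hr]; have : d < r / 2 := hy; linarith
  have hballsub : ball x (r * (1 - ε)) ⊆ By := by
    intro z hz
    have hz' : dist z x < r * (1 - ε) := mem_ball.1 hz
    have hre : r * (1 - ε) = r - 2 * d := by
      rw [hε, mul_sub, mul_one, mul_div_assoc', mul_comm r, mul_div_assoc, div_self hr.ne', mul_one]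
    rw [hre] at hz'
    have : dist z y ≤ dist z x + dist x y := dist_triangle z x y
    exact mem_ball.2 (by simp only [← hd] at this; linarith)
  have hcount : ν univ ≤ ENNReal.ofReal (A * ε ^ δ) * a := by
    have h1 : a ≤ μ (Bx \ By) + b := by
      calc a ≤ μ (By ∪ Bx \ By) := measure_mono (fun z hz => by
            by_cases h : z ∈ By
            · exact Or.inl h
            · exact Or.inr ⟨hz, h⟩)
        _ ≤ b + μ (Bx \ By) := measure_union_le _ _
        _ = μ (Bx \ By) + b := by ring
    have h2 : ν univ ≤ μ (Bx \ By) := by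
      rw [← ENNReal.add_le_add_iff_right hbT, hνuniv]
      exact h1
    calc ν univ ≤ μ (Bx \ By) := h2
      _ ≤ μ (Bx \ ball x (r * (1 - ε))) := measure_mono (diff_subset_diff_right hballsub)
      _ ≤ ENNReal.ofReal (A * ε ^ δ) * a := hann x r ε hr hεIoo
  have hAε0 : 0 ≤ A * ε ^ δ := mul_nonneg hA0.le (Real.rpow_nonneg hεIoo.1.le δ)
  have hcreal : c ≤ A * ε ^ δ * a' := by
    have := ENNReal.toReal_mono (by
        exact ENNReal.mul_ne_top ENNReal.ofReal_ne_top haT) hcount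
    rwa [ENNReal.toReal_mul, ENNReal.toReal_ofReal hAε0] at this
  -- finish
  have hmain : |f x - f y| ≤ 2 * M * (A * ε ^ δ) := by
    have h2 : a' * |f x - f y| ≤ a' * (2 * M * (A * ε ^ δ)) := by
      calc a' * |f x - f y| ≤ 2 * M * c := habs
        _ ≤ 2 * M * (A * ε ^ δ * a') := by
            exact mul_le_mul_of_nonneg_left hcreal (by linarith)
        _ = a' * (2 * M * (A * ε ^ δ)) := by ring
    exact le_of_mul_le_mul_left h2 ha'pos
  refine hmain.trans ?_
  have hεδ : ε ^ δ = 2 ^ δ * (d / r) ^ δ := by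
    rw [hε, mul_div_assoc, Real.mul_rpow (by norm_num) hdr0]
  have h23 : (2:ℝ) ^ δ ≤ 3 ^ δ := Real.rpow_le_rpow (by norm_num) (by norm_num) hδ.1.le
  have hC3 : (1:ℝ) ≤ Cμ ^ 3 := one_le_pow₀ hCμ
  have ht0 : (0:ℝ) ≤ (d / r) ^ δ := Real.rpow_nonneg hdr0 δ
  have h20 : (0:ℝ) < 2 ^ δ := Real.rpow_pos_of_pos (by norm_num) δ
  rw [hεδ]
  have hMA : 0 ≤ 2 * M * A := by positivity
  nlinarith [mul_nonneg (mul_nonneg hMA ht0) (sub_nonneg.2 h23),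
    mul_nonneg (mul_nonneg (mul_nonneg hMA ht0) (Real.rpow_pos_of_pos (by norm_num : (0:ℝ)<3) δ).le) (sub_nonneg.2 hC3)]
end

section
/- On the real line with the Euclidean metric and the measure dμ = e^{-|x|} dx, the measure μ is continuous with respect to the metric, but X fails the δ-annular decay property for every δ ∈ (0,1] and every constant A: for annuli B(x,r)\B(x,r(1−1/r)) with x > r, the ratio μ(B(x,r)\B(x,r(1−1/r)))/μ(B(x,r)) converges to 1 − 1/e as r → ∞. -/
open MeasureTheory Metric Set Filter

/-- The measure dμ = e^{-|x|} dx on the real line. -/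
noncomputable def expAbsMeasure : Measure ℝ :=
  MeasureTheory.volume.withDensity (fun x => ENNReal.ofReal (Real.exp (-|x|)))


section AuxLemmas

open MeasureTheory Metric Set Filter

private lemma expAbs_le_volume' (s : Set ℝ) :
    MeasureTheory.volume.withDensity (fun x => ENNReal.ofReal (Real.exp (-|x|))) s
      ≤ MeasureTheory.volume s := by
  rw [withDensity_apply' _ s]
  calc ∫⁻ t in s, ENNReal.ofReal (Real.exp (-|t|)) ≤ ∫⁻ _ in s, 1 :=
        lintegral_mono fun t => by
          simpa using ENNReal.ofReal_le_one.mpr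
            (Real.exp_le_one_iff.mpr (neg_nonpos.mpr (abs_nonneg t)))
    _ = MeasureTheory.volume s := by simp

end AuxLemmas

open MeasureTheory Metric Set Filter in
private lemma expAbs_le_volume (s : Set ℝ) : expAbsMeasure s ≤ MeasureTheory.volume s := by
  rw [expAbsMeasure]; exact expAbs_le_volume' s

open MeasureTheory Metric Set Filter in
private lemma expAbs_ball (x r : ℝ) (hr : 0 ≤ r) (hx : r ≤ x) :
    expAbsMeasure (ball x r) = ENNReal.ofReal (Real.exp (-(x-r)) - Real.exp (-(x+r))) := by
  rw [Real.ball_eq_Ioo, expAbsMeasure, withDensity_apply _ measurableSet_Ioo]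
  have h1 : ∀ t ∈ Ioo (x - r) (x + r),
      ENNReal.ofReal (Real.exp (-|t|)) = ENNReal.ofReal (Real.exp (-t)) := by
    intro t ht
    rw [abs_of_nonneg (by have := ht.1; linarith)]
  rw [setLIntegral_congr_fun measurableSet_Ioo h1]
  rw [← ofReal_integral_eq_lintegral_ofReal]
  · congr 1
    rw [← integral_Ioc_eq_integral_Ioo, ← intervalIntegral.integral_of_le (by linarith)]
    have := intervalIntegral.integral_comp_neg (a := x - r) (b := x + r) (fun t => Real.exp t)
    rw [this, integral_exp]
  · exact (((Real.continuous_exp.comp continuous_neg).continuousOn).integrableOn_compact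
      isCompact_Icc).mono_set Ioo_subset_Icc_self
  · exact Eventually.of_forall fun t => (Real.exp_pos _).le

open MeasureTheory Metric Set Filter in
private lemma expAbs_ball_ne_top (x r : ℝ) : expAbsMeasure (ball x r) ≠ ⊤ :=
  ((expAbs_le_volume _).trans_lt measure_ball_lt_top).ne

open MeasureTheory Metric Set Filter in
private lemma expAbs_part1 (x r : ℝ) (_hr : 0 < r) :
    Tendsto (fun y : ℝ =>
        expAbsMeasure ((ball x r \ ball y r) ∪ (ball y r \ ball x r)))
      (nhds x) (nhds 0) := by
  have key : ∀ u v : ℝ,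
      MeasureTheory.volume (ball u r \ ball v r) ≤ ENNReal.ofReal |u - v| * 2 := by
    intro u v
    have hsub : ball u r \ ball v r ⊆ Ioc (u - r) (v - r) ∪ Ico (v + r) (u + r) := by
      intro t ht
      rw [Real.ball_eq_Ioo, Real.ball_eq_Ioo] at ht
      obtain ⟨⟨h1, h2⟩, h3⟩ := ht
      simp only [mem_Ioo, not_and, not_lt] at h3
      rcases lt_or_ge (v - r) t with hc | hc
      · exact Or.inr ⟨h3 hc, h2⟩
      · exact Or.inl ⟨h1, hc⟩
    calc MeasureTheory.volume (ball u r \ ball v r)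
        ≤ MeasureTheory.volume (Ioc (u - r) (v - r))
            + MeasureTheory.volume (Ico (v + r) (u + r)) :=
          le_trans (measure_mono hsub) (measure_union_le _ _)
      _ ≤ ENNReal.ofReal |u - v| + ENNReal.ofReal |u - v| := by
          rw [Real.volume_Ioc, Real.volume_Ico]
          gcongr
          · have : v - u ≤ |u - v| := by rw [abs_sub_comm]; exact le_abs_self _
            linarith
          · have : u - v ≤ |u - v| := le_abs_self _
            linarith
      _ = ENNReal.ofReal |u - v| * 2 := by ring
  have bound : ∀ y : ℝ,
      expAbsMeasure ((ball x r \ ball y r) ∪ (ball y r \ ball x r))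
        ≤ ENNReal.ofReal |y - x| * 4 := by
    intro y
    calc expAbsMeasure ((ball x r \ ball y r) ∪ (ball y r \ ball x r))
        ≤ MeasureTheory.volume ((ball x r \ ball y r) ∪ (ball y r \ ball x r)) :=
          expAbs_le_volume _
      _ ≤ MeasureTheory.volume (ball x r \ ball y r)
            + MeasureTheory.volume (ball y r \ ball x r) := measure_union_le _ _
      _ ≤ ENNReal.ofReal |x - y| * 2 + ENNReal.ofReal |y - x| * 2 :=
          add_le_add (key x y) (key y x)
      _ = ENNReal.ofReal |y - x| * 4 := by rw [abs_sub_comm x y]; ring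
  have hub : Tendsto (fun y : ℝ => ENNReal.ofReal |y - x| * 4) (nhds x) (nhds 0) := by
    have h1 : Tendsto (fun y : ℝ => |y - x|) (nhds x) (nhds 0) := by
      have := ((continuous_id.sub (continuous_const (y := x))).abs).tendsto x
      simpa using this
    have := ENNReal.Tendsto.mul_const (ENNReal.tendsto_ofReal h1) (b := 4)
      (Or.inr (by norm_num))
    simpa using this
  exact tendsto_of_tendsto_of_tendsto_of_le_of_le tendsto_const_nhds hub (fun y => zero_le) bound

open MeasureTheory Metric Set Filter in
private lemma expAbs_part2 (xc : ℝ → ℝ) (hxc : ∀ r : ℝ, r < xc r) :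
    Tendsto (fun r : ℝ =>
        (expAbsMeasure (ball (xc r) r \ ball (xc r) (r * (1 - 1 / r)))).toReal /
          (expAbsMeasure (ball (xc r) r)).toReal)
      atTop (nhds (1 - 1 / Real.exp 1)) := by
  set c := Real.exp 1 with hc
  have hcpos : (0:ℝ) < c := Real.exp_pos 1
  have g_lim : Tendsto (fun r : ℝ =>
      (1 - (Real.exp r)⁻¹ * (Real.exp r)⁻¹ - c⁻¹ + c * ((Real.exp r)⁻¹ * (Real.exp r)⁻¹)) /
        (1 - (Real.exp r)⁻¹ * (Real.exp r)⁻¹)) atTop (nhds (1 - 1 / c)) := by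
    have hi : Tendsto (fun r : ℝ => (Real.exp r)⁻¹) atTop (nhds 0) :=
      Real.tendsto_exp_atTop.inv_tendsto_atTop
    have hnum : Tendsto (fun r : ℝ =>
        1 - (Real.exp r)⁻¹ * (Real.exp r)⁻¹ - c⁻¹ + c * ((Real.exp r)⁻¹ * (Real.exp r)⁻¹))
        atTop (nhds (1 - 0 * 0 - c⁻¹ + c * (0 * 0))) :=
      ((tendsto_const_nhds.sub (hi.mul hi)).sub tendsto_const_nhds).add
        (tendsto_const_nhds.mul (hi.mul hi))
    have hden : Tendsto (fun r : ℝ => 1 - (Real.exp r)⁻¹ * (Real.exp r)⁻¹)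
        atTop (nhds (1 - 0 * 0)) := tendsto_const_nhds.sub (hi.mul hi)
    have := hnum.div hden (by norm_num)
    rw [show (1:ℝ) - 1 / c = (1 - 0 * 0 - c⁻¹ + c * (0 * 0)) / (1 - 0 * 0) by norm_num]
    exact this
  apply g_lim.congr'
  filter_upwards [eventually_gt_atTop (1:ℝ)] with r hr1
  set x := xc r with hx
  have hxr : r < x := hxc r
  have hr0 : (0:ℝ) < r := by linarith
  have hsmall : r * (1 - 1 / r) = r - 1 := by field_simp
  have hb : expAbsMeasure (ball x r) = ENNReal.ofReal (Real.exp (-(x-r)) - Real.exp (-(x+r))) :=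
    expAbs_ball x r hr0.le hxr.le
  have hs : expAbsMeasure (ball x (r-1)) =
      ENNReal.ofReal (Real.exp (-(x-(r-1))) - Real.exp (-(x+(r-1)))) :=
    expAbs_ball x (r-1) (by linarith) (by linarith)
  have hdiff : expAbsMeasure (ball x r \ ball x (r - 1)) =
      expAbsMeasure (ball x r) - expAbsMeasure (ball x (r - 1)) :=
    measure_diff (ball_subset_ball (by linarith)) measurableSet_ball.nullMeasurableSet
      (expAbs_ball_ne_top _ _)
  have hble : expAbsMeasure (ball x (r-1)) ≤ expAbsMeasure (ball x r) :=
    measure_mono (ball_subset_ball (by linarith))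
  have hnonneg1 : (0:ℝ) ≤ Real.exp (-(x-r)) - Real.exp (-(x+r)) := by
    have := Real.exp_le_exp.mpr (show -(x+r) ≤ -(x-r) by linarith)
    linarith
  have hnonneg2 : (0:ℝ) ≤ Real.exp (-(x-(r-1))) - Real.exp (-(x+(r-1))) := by
    have := Real.exp_le_exp.mpr (show -(x+(r-1)) ≤ -(x-(r-1)) by linarith)
    linarith
  have hann : (expAbsMeasure (ball x r \ ball x (r - 1))).toReal =
      (Real.exp (-(x-r)) - Real.exp (-(x+r)))
        - (Real.exp (-(x-(r-1))) - Real.exp (-(x+(r-1)))) := by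
    rw [hdiff, ENNReal.toReal_sub_of_le hble (expAbs_ball_ne_top _ _), hb, hs,
      ENNReal.toReal_ofReal hnonneg1, ENNReal.toReal_ofReal hnonneg2]
  rw [hsmall, hann, hb, ENNReal.toReal_ofReal hnonneg1]
  set a := Real.exp r with ha
  have hapos : (0:ℝ) < a := Real.exp_pos r
  have ha1 : 1 < a := by rw [ha]; exact Real.one_lt_exp_iff.mpr hr0
  have hc0 : c ≠ 0 := ne_of_gt hcpos
  have ha0 : a ≠ 0 := ne_of_gt hapos
  have e1 : Real.exp (-(x - r)) = Real.exp (-x) * a := by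
    rw [ha, ← Real.exp_add]; congr 1; ring
  have e2 : Real.exp (-(x + r)) = Real.exp (-x) * a⁻¹ := by
    rw [ha, ← Real.exp_neg, ← Real.exp_add]; congr 1; ring
  have e3 : Real.exp (-(x - (r - 1))) = Real.exp (-x) * (a * c⁻¹) := by
    rw [ha, hc, ← Real.exp_neg, ← Real.exp_add, ← Real.exp_add]; congr 1; ring
  have e4 : Real.exp (-(x + (r - 1))) = Real.exp (-x) * (c * a⁻¹) := by
    rw [ha, hc, ← Real.exp_neg, ← Real.exp_add, ← Real.exp_add]; congr 1; ring
  rw [e1, e2, e3, e4]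
  have hd1 : Real.exp (-x) * a - Real.exp (-x) * a⁻¹ ≠ 0 := by
    have h1 : a⁻¹ < a := by
      have : a⁻¹ < 1 := inv_lt_one_of_one_lt₀ ha1
      linarith
    have : 0 < Real.exp (-x) * a - Real.exp (-x) * a⁻¹ := by
      have := Real.exp_pos (-x)
      nlinarith
    exact ne_of_gt this
  have hd2 : 1 - a⁻¹ * a⁻¹ ≠ 0 := by
    have hia : a⁻¹ < 1 := inv_lt_one_of_one_lt₀ ha1
    have hia0 : 0 < a⁻¹ := inv_pos.mpr hapos
    nlinarith
  rw [div_eq_div_iff hd2 hd1]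
  field_simp
  ring

/-- On (ℝ, |·|, e^{-|x|}dx), the measure is continuous with respect to the
metric, yet the δ-annular decay property fails for every δ ∈ (0,1] and every A: for the
annuli B(x,r) \ B(x,r(1−1/r)) with x > r the measure ratio tends to 1 − 1/e as r → ∞. -/
theorem expAbs_measure_continuous_but_no_annular_decay :
    (∀ (x r : ℝ), 0 < r →
      Tendsto (fun y : ℝ =>
          expAbsMeasure ((ball x r \ ball y r) ∪ (ball y r \ ball x r)))
        (nhds x) (nhds 0)) ∧
    (∀ xc : ℝ → ℝ, (∀ r : ℝ, r < xc r) →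
      Tendsto (fun r : ℝ =>
          (expAbsMeasure (ball (xc r) r \ ball (xc r) (r * (1 - 1 / r)))).toReal /
            (expAbsMeasure (ball (xc r) r)).toReal)
        atTop (nhds (1 - 1 / Real.exp 1))) ∧
    (∀ δ ∈ Set.Ioc (0:ℝ) 1, ∀ A : ℝ, 1 ≤ A →
      ¬ (∀ (x r ε : ℝ), 0 < r → ε ∈ Set.Ioo (0:ℝ) 1 →
          expAbsMeasure (ball x r \ ball x (r * (1 - ε))) ≤
            ENNReal.ofReal (A * ε ^ δ) * expAbsMeasure (ball x r))) := by
  refine ⟨fun x r hr => expAbs_part1 x r hr, expAbs_part2, ?_⟩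
  rintro δ ⟨hδ0, hδ1⟩ A hA H
  set xc : ℝ → ℝ := fun r => r + 1 with hxc
  have hlt : ∀ r : ℝ, r < xc r := fun r => by simp [hxc]
  have h2 := expAbs_part2 xc hlt
  have hb : Tendsto (fun r : ℝ => A * (1 / r) ^ δ) atTop (nhds 0) := by
    have h0 : Tendsto (fun r : ℝ => r ^ (-δ)) atTop (nhds 0) := tendsto_rpow_neg_atTop hδ0
    have heq : (fun r : ℝ => A * (1 / r) ^ δ) =ᶠ[atTop] (fun r : ℝ => A * r ^ (-δ)) := by
      filter_upwards [eventually_gt_atTop (0:ℝ)] with r hr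
      rw [one_div, ← Real.rpow_neg_one, ← Real.rpow_mul hr.le]
      norm_num
    refine Tendsto.congr' heq.symm ?_
    simpa using (tendsto_const_nhds (x := A)).mul h0
  have hub : ∀ᶠ r : ℝ in atTop,
      (expAbsMeasure (ball (xc r) r \ ball (xc r) (r * (1 - 1 / r)))).toReal /
        (expAbsMeasure (ball (xc r) r)).toReal ≤ A * (1 / r) ^ δ := by
    filter_upwards [eventually_gt_atTop (1:ℝ)] with r hr1
    have hr0 : (0:ℝ) < r := by linarith
    have hε : (1 / r : ℝ) ∈ Set.Ioo (0:ℝ) 1 := by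
      constructor
      · positivity
      · rw [div_lt_one hr0]; linarith
    have key := H (xc r) r (1 / r) hr0 hε
    have hApos : (0:ℝ) ≤ A * (1 / r) ^ δ := by
      have : (0:ℝ) ≤ (1 / r) ^ δ := Real.rpow_nonneg (by positivity) δ
      nlinarith
    have hxcr : r ≤ xc r := (hlt r).le
    have hval : 0 < Real.exp (-(xc r - r)) - Real.exp (-(xc r + r)) := by
      have := Real.exp_lt_exp.mpr (show -(xc r + r) < -(xc r - r) by linarith)
      linarith
    have hbpos : 0 < (expAbsMeasure (ball (xc r) r)).toReal := by
      rw [expAbs_ball (xc r) r hr0.le hxcr, ENNReal.toReal_ofReal hval.le]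
      exact hval
    rw [div_le_iff₀ hbpos]
    calc (expAbsMeasure (ball (xc r) r \ ball (xc r) (r * (1 - 1 / r)))).toReal
        ≤ (ENNReal.ofReal (A * (1 / r) ^ δ) * expAbsMeasure (ball (xc r) r)).toReal := by
          apply ENNReal.toReal_mono _ key
          exact ENNReal.mul_ne_top ENNReal.ofReal_ne_top (expAbs_ball_ne_top _ _)
      _ = A * (1 / r) ^ δ * (expAbsMeasure (ball (xc r) r)).toReal := by
          rw [ENNReal.toReal_mul, ENNReal.toReal_ofReal hApos]
  have hle := le_of_tendsto_of_tendsto h2 hb hub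
  have : 1 / Real.exp 1 < 1 := by
    rw [div_lt_one (Real.exp_pos 1)]
    exact Real.one_lt_exp_iff.mpr one_pos
  linarith
end

section
/- Let (X,d,μ) be a metric measure space such that for every x, y ∈ X, liminf_{r→∞} μ(B(x,r) Δ B(y,r)) / μ(B(x,r)) = 0. Then every bounded strongly harmonic function on all of X is constant. -/
open MeasureTheory Metric Set Filter

/-- A metric space carrying a measure which is positive and finite on all balls is
second countable. -/
lemma secondCountable_of_measure_balls {X : Type*} [MetricSpace X] [MeasurableSpace X]
    [OpensMeasurableSpace X] (μ : Measure X)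
    (hpos : ∀ (x : X) (r : ℝ), 0 < r → 0 < μ (ball x r))
    (hfin : ∀ (x : X) (r : ℝ), 0 < r → μ (ball x r) < ⊤) (x₀ : X) :
    SecondCountableTopology X := by
  apply Metric.secondCountable_of_almost_dense_set
  intro ε hε
  -- a maximal ε-separated set
  obtain ⟨T, hTmem, hTmax⟩ : ∃ T, Maximal (· ∈ {t : Set X | t.Pairwise fun a b => ε ≤ dist a b}) T := by
    apply zorn_subset
    intro c hc hchain
    refine ⟨⋃₀ c, ?_, fun s hs => subset_sUnion_of_mem hs⟩
    intro a ha b hb hab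
    obtain ⟨s, hs, has⟩ := ha
    obtain ⟨t, ht, hbt⟩ := hb
    rcases hchain.total hs ht with hst | hts
    · exact hc ht (hst has) hbt hab
    · exact hc hs has (hts hbt) hab
  have hTsep : T.Pairwise fun a b => ε ≤ dist a b := hTmem
  -- T is countable
  have hTcnt : T.Countable := by
    have hcov : T ⊆ ⋃ n : ℕ, T ∩ ball x₀ (n + 1) := by
      intro z hz
      obtain ⟨n, hn⟩ := exists_nat_gt (dist z x₀)
      exact mem_iUnion.mpr ⟨n, hz, by simp only [mem_ball]; linarith⟩
    refine Set.Countable.mono hcov (countable_iUnion fun n => ?_)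
    have key := MeasureTheory.Measure.countable_meas_pos_of_disjoint_of_meas_iUnion_ne_top
      (ι := ↥(T ∩ ball x₀ (n + 1))) μ (As := fun i => ball (i : X) (ε / 2))
      (fun _ => measurableSet_ball)
      (fun i j hij => by
        have hne : (i : X) ≠ (j : X) := Subtype.coe_injective.ne hij
        have hd : ε ≤ dist (i : X) (j : X) := hTsep i.2.1 j.2.1 hne
        exact ball_disjoint_ball (by linarith))
      (by
        have hsub : (⋃ i : ↥(T ∩ ball x₀ (n + 1)), ball (i : X) (ε / 2))
            ⊆ ball x₀ (n + 1 + ε) := by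
          rintro z hz
          obtain ⟨i, hi⟩ := mem_iUnion.mp hz
          have h1 : dist z (i : X) < ε / 2 := mem_ball.mp hi
          have h2 : dist (i : X) x₀ < n + 1 := mem_ball.mp i.2.2
          have := dist_triangle z (i : X) x₀
          exact mem_ball.mpr (by linarith)
        exact ((measure_mono hsub).trans_lt (hfin x₀ (n + 1 + ε) (by positivity))).ne)
    have hall : {i : ↥(T ∩ ball x₀ (n + 1)) | 0 < μ (ball (i : X) (ε / 2))} = Set.univ :=
      eq_univ_of_forall fun i => hpos _ _ (half_pos hε)
    rw [hall] at key
    exact Set.countable_coe_iff.mp (Set.countable_univ_iff.mp key)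
  -- maximality gives density
  refine ⟨T, hTcnt, fun z => ?_⟩
  by_contra hcon
  push_neg at hcon
  have hins : insert z T ∈ {t : Set X | t.Pairwise fun a b => ε ≤ dist a b} := by
    intro a ha b hb hab
    rcases ha with rfl | ha
    · rcases hb with rfl | hb
      · exact absurd rfl hab
      · exact (hcon b hb).le
    · rcases hb with rfl | hb
      · rw [dist_comm]; exact (hcon a ha).le
      · exact hTsep ha hb hab
  have hzT : z ∈ T := hTmax hins (subset_insert z T) (mem_insert z T)
  have := hcon z hzT
  simp at this
  linarith

/-- Liouville theorem: if for all x, y,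
liminf_{r→∞} μ(B(x,r) Δ B(y,r))/μ(B(x,r)) = 0, then every bounded function on X which is
locally integrable and satisfies the mean value property over all balls is constant. -/
theorem liouville_of_symmDiff_liminf {X : Type*} [MetricSpace X] [MeasurableSpace X]
    [OpensMeasurableSpace X] (μ : Measure X)
    (hpos : ∀ (x : X) (r : ℝ), 0 < r → 0 < μ (ball x r))
    (hfin : ∀ (x : X) (r : ℝ), 0 < r → μ (ball x r) < ⊤)
    (hlim : ∀ x y : X,
      Filter.liminf (fun r : ℝ =>
          μ ((ball x r \ ball y r) ∪ (ball y r \ ball x r)) / μ (ball x r))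
        Filter.atTop = 0)
    (f : X → ℝ) (hloc : LocallyIntegrable f μ)
    (hmvp : ∀ (x : X) (r : ℝ), 0 < r → f x = ⨍ y in ball x r, f y ∂μ)
    (M : ℝ) (hbdd : ∀ x : X, |f x| ≤ M) :
    ∀ x y : X, f x = f y := by
  intro x y
  haveI : SecondCountableTopology X := secondCountable_of_measure_balls μ hpos hfin x
  by_contra hne
  set c := |f x - f y| with hc
  have hcpos : 0 < c := abs_pos.mpr (sub_ne_zero.mpr hne)
  have hMpos : 0 < M := by
    have h1 := hbdd x
    have h2 := hbdd y
    have h3 := abs_sub (f x) (f y)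
    nlinarith [abs_nonneg (f x - f y)]
  have hmeas : AEStronglyMeasurable f μ := hloc.aestronglyMeasurable
  -- integrability and bound on any finite-measure set
  have hint : ∀ s : Set X, μ s < ⊤ → IntegrableOn f s μ := fun s hs =>
    Measure.integrableOn_of_bounded hs.ne hmeas
      (Filter.Eventually.of_forall fun z => by simpa [Real.norm_eq_abs] using hbdd z)
  have hIb : ∀ s : Set X, μ s < ⊤ → |∫ z in s, f z ∂μ| ≤ M * (μ s).toReal := by
    intro s hs
    simpa [Real.norm_eq_abs, Measure.real] using
      norm_setIntegral_le_of_norm_le_const_ae' (f := f) (C := M) hs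
        (Filter.Eventually.of_forall fun z _ => by simpa [Real.norm_eq_abs] using hbdd z)
  -- key real estimate
  have key : ∀ r : ℝ, 0 < r →
      c ≤ 2 * M * ((μ ((ball x r \ ball y r) ∪ (ball y r \ ball x r))).toReal
        / (μ (ball x r)).toReal) := by
    intro r hr
    set Bx := ball x r with hBx
    set By := ball y r with hBy
    have hmx : MeasurableSet Bx := measurableSet_ball
    have hmy : MeasurableSet By := measurableSet_ball
    set A := (μ Bx).toReal with hA
    set B := (μ By).toReal with hB
    have hfx := hfin x r hr
    have hfy := hfin y r hr
    have hApos : 0 < A := ENNReal.toReal_pos (hpos x r hr).ne' hfx.ne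
    have hBpos : 0 < B := ENNReal.toReal_pos (hpos y r hr).ne' hfy.ne
    have hdisj : Disjoint (Bx \ By) (By \ Bx) := disjoint_sdiff_sdiff
    have hDfin : μ ((Bx \ By) ∪ (By \ Bx)) < ⊤ :=
      lt_of_le_of_lt (measure_union_le _ _)
        (ENNReal.add_lt_top.mpr ⟨lt_of_le_of_lt (measure_mono diff_subset) hfx,
          lt_of_le_of_lt (measure_mono diff_subset) hfy⟩)
    set Dt := (μ ((Bx \ By) ∪ (By \ Bx))).toReal with hDt
    have hD1fin : μ (Bx \ By) < ⊤ := lt_of_le_of_lt (measure_mono diff_subset) hfx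
    have hD2fin : μ (By \ Bx) < ⊤ := lt_of_le_of_lt (measure_mono diff_subset) hfy
    have hDsum : Dt = (μ (Bx \ By)).toReal + (μ (By \ Bx)).toReal := by
      rw [hDt, measure_union hdisj (hmy.diff hmx),
        ENNReal.toReal_add hD1fin.ne hD2fin.ne]
    set Ix := ∫ z in Bx, f z ∂μ with hIx
    set Iy := ∫ z in By, f z ∂μ with hIy
    have hsplit_x : (∫ z in Bx ∩ By, f z ∂μ) + (∫ z in Bx \ By, f z ∂μ) = Ix :=
      integral_inter_add_diff hmy (hint Bx hfx)
    have hsplit_y : (∫ z in By ∩ Bx, f z ∂μ) + (∫ z in By \ Bx, f z ∂μ) = Iy :=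
      integral_inter_add_diff hmx (hint By hfy)
    have hinter : (∫ z in By ∩ Bx, f z ∂μ) = (∫ z in Bx ∩ By, f z ∂μ) := by
      rw [Set.inter_comm]
    have hIdiff : Ix - Iy = (∫ z in Bx \ By, f z ∂μ) - (∫ z in By \ Bx, f z ∂μ) := by
      rw [← hsplit_x, ← hsplit_y, hinter]; ring
    have h1 : |Ix - Iy| ≤ M * Dt := by
      rw [hIdiff, hDsum]
      calc |(∫ z in Bx \ By, f z ∂μ) - (∫ z in By \ Bx, f z ∂μ)|
          ≤ |∫ z in Bx \ By, f z ∂μ| + |∫ z in By \ Bx, f z ∂μ| := abs_sub _ _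
        _ ≤ M * (μ (Bx \ By)).toReal + M * (μ (By \ Bx)).toReal :=
            add_le_add (hIb _ hD1fin) (hIb _ hD2fin)
        _ = M * ((μ (Bx \ By)).toReal + (μ (By \ Bx)).toReal) := by ring
    have h2 : |Iy| ≤ M * B := hIb By hfy
    have hAB1 : A ≤ B + Dt := by
      have hsub : μ Bx ≤ μ By + μ ((Bx \ By) ∪ (By \ Bx)) := by
        refine le_trans (measure_mono ?_) (measure_union_le _ _)
        intro z hz
        by_cases hzy : z ∈ By
        · exact Or.inl hzy
        · exact Or.inr (Or.inl ⟨hz, hzy⟩)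
      calc A ≤ (μ By + μ ((Bx \ By) ∪ (By \ Bx))).toReal :=
            ENNReal.toReal_mono (ENNReal.add_ne_top.mpr ⟨hfy.ne, hDfin.ne⟩) hsub
        _ = B + Dt := ENNReal.toReal_add hfy.ne hDfin.ne
    have hAB2 : B ≤ A + Dt := by
      have hsub : μ By ≤ μ Bx + μ ((Bx \ By) ∪ (By \ Bx)) := by
        refine le_trans (measure_mono ?_) (measure_union_le _ _)
        intro z hz
        by_cases hzx : z ∈ Bx
        · exact Or.inl hzx
        · exact Or.inr (Or.inr ⟨hz, hzx⟩)
      calc B ≤ (μ Bx + μ ((Bx \ By) ∪ (By \ Bx))).toReal :=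
            ENNReal.toReal_mono (ENNReal.add_ne_top.mpr ⟨hfx.ne, hDfin.ne⟩) hsub
        _ = A + Dt := ENNReal.toReal_add hfx.ne hDfin.ne
    have h3 : |A - B| ≤ Dt := abs_sub_le_iff.mpr ⟨by linarith, by linarith⟩
    have hDtnn : 0 ≤ Dt := ENNReal.toReal_nonneg
    have hfx' : f x = Ix / A := by
      rw [hmvp x r hr, setAverage_eq, smul_eq_mul, div_eq_inv_mul]; rfl
    have hfy' : f y = Iy / B := by
      rw [hmvp y r hr, setAverage_eq, smul_eq_mul, div_eq_inv_mul]; rfl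
    have h4 : |Ix * B - A * Iy| ≤ 2 * M * Dt * B := by
      have heq : Ix * B - A * Iy = (Ix - Iy) * B + Iy * (B - A) := by ring
      rw [heq]
      calc |(Ix - Iy) * B + Iy * (B - A)| ≤ |(Ix - Iy) * B| + |Iy * (B - A)| := abs_add_le _ _
        _ = |Ix - Iy| * B + |Iy| * |A - B| := by
            rw [abs_mul, abs_mul, abs_of_pos hBpos, abs_sub_comm A B]
        _ ≤ (M * Dt) * B + (M * B) * Dt := by
            refine add_le_add (mul_le_mul_of_nonneg_right h1 hBpos.le) ?_
            exact mul_le_mul h2 h3 (abs_nonneg _) (by positivity)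
        _ = 2 * M * Dt * B := by ring
    rw [hc, hfx', hfy', div_sub_div _ _ hApos.ne' hBpos.ne', abs_div,
      abs_of_pos (mul_pos hApos hBpos), div_le_iff₀ (mul_pos hApos hBpos)]
    have heq2 : 2 * M * (Dt / A) * (A * B) = 2 * M * Dt * B := by
      field_simp
    rw [heq2]
    exact h4
  -- pass to the liminf
  have hlow : ∀ r : ℝ, 0 < r →
      ENNReal.ofReal (c / (2 * M)) ≤
        μ ((ball x r \ ball y r) ∪ (ball y r \ ball x r)) / μ (ball x r) := by
    intro r hr
    have hfx := hfin x r hr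
    have hDfin : μ ((ball x r \ ball y r) ∪ (ball y r \ ball x r)) < ⊤ :=
      lt_of_le_of_lt (measure_union_le _ _)
        (ENNReal.add_lt_top.mpr ⟨lt_of_le_of_lt (measure_mono diff_subset) hfx,
          lt_of_le_of_lt (measure_mono diff_subset) (hfin y r hr)⟩)
    have hratio_fin : μ ((ball x r \ ball y r) ∪ (ball y r \ ball x r)) / μ (ball x r) ≠ ⊤ :=
      (ENNReal.div_lt_top hDfin.ne (hpos x r hr).ne').ne
    have hreal : c / (2 * M) ≤
        (μ ((ball x r \ ball y r) ∪ (ball y r \ ball x r)) / μ (ball x r)).toReal := by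
      rw [ENNReal.toReal_div, div_le_iff₀ (by positivity : (0:ℝ) < 2 * M)]
      have hk := key r hr
      linarith
    calc ENNReal.ofReal (c / (2 * M))
        ≤ ENNReal.ofReal ((μ ((ball x r \ ball y r) ∪ (ball y r \ ball x r)) /
            μ (ball x r)).toReal) := ENNReal.ofReal_le_ofReal hreal
      _ = _ := ENNReal.ofReal_toReal hratio_fin
  have hev : ∀ᶠ r : ℝ in atTop, ENNReal.ofReal (c / (2 * M)) ≤
      μ ((ball x r \ ball y r) ∪ (ball y r \ ball x r)) / μ (ball x r) :=
    (eventually_gt_atTop 0).mono fun r hr => hlow r hr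
  have hle : ENNReal.ofReal (c / (2 * M)) ≤
      Filter.liminf (fun r : ℝ =>
        μ ((ball x r \ ball y r) ∪ (ball y r \ ball x r)) / μ (ball x r)) Filter.atTop :=
    Filter.le_liminf_of_le (by isBoundedDefault) hev
  rw [hlim x y] at hle
  have hzero : c / (2 * M) ≤ 0 :=
    ENNReal.ofReal_eq_zero.mp (le_antisymm hle zero_le)
  have : 0 < c / (2 * M) := by positivity
  linarith
end

section
/- Let (X,d,μ) be a proper metric measure space with μ(X) < ∞. Then every bounded strongly harmonic function on X is constant. -/
open MeasureTheory Metric Set Filter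
open scoped Topology

/-- If X is proper and μ(X) < ∞, then every bounded function satisfying the
mean value property over all balls of X (i.e. bounded strongly harmonic on X) is
constant. -/
theorem liouville_of_finite_measure {X : Type*} [MetricSpace X] [ProperSpace X]
    [MeasurableSpace X] [OpensMeasurableSpace X] (μ : Measure X)
    (hpos : ∀ (x : X) (r : ℝ), 0 < r → 0 < μ (ball x r))
    (hXfin : μ Set.univ < ⊤)
    (f : X → ℝ) (hloc : LocallyIntegrable f μ)
    (hmvp : ∀ (x : X) (r : ℝ), 0 < r → f x = ⨍ y in ball x r, f y ∂μ)
    (M : ℝ) (hbdd : ∀ x : X, |f x| ≤ M) :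
    ∀ x y : X, f x = f y := by
  haveI : IsFiniteMeasure μ := ⟨hXfin⟩
  have hint : Integrable f μ := by
    refine (integrable_const M).mono' hloc.aestronglyMeasurable ?_
    exact Eventually.of_forall fun z => by simpa using hbdd z
  have key : ∀ x : X, f x = (μ Set.univ).toReal⁻¹ * ∫ z, f z ∂μ := by
    intro x
    have hμpos : 0 < (μ Set.univ).toReal := by
      refine ENNReal.toReal_pos ?_ hXfin.ne
      intro h
      exact absurd (le_antisymm (h ▸ measure_mono (subset_univ (ball x 1))) zero_le)
        (hpos x 1 one_pos).ne'
    set s : ℕ → Set X := fun n => ball x (n + 1) with hs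
    have hsm : ∀ n, MeasurableSet (s n) := fun n => measurableSet_ball
    have hmono : Monotone s := fun a b hab =>
      ball_subset_ball (by exact_mod_cast add_le_add_left (Nat.cast_le.2 hab) 1)
    have hU : ⋃ n, s n = Set.univ := by
      ext z
      simp only [mem_iUnion, mem_univ, iff_true, hs, mem_ball]
      obtain ⟨n, hn⟩ := exists_nat_gt (dist z x)
      exact ⟨n, by linarith⟩
    have hI : Tendsto (fun n => ∫ z in s n, f z ∂μ) atTop (𝓝 (∫ z, f z ∂μ)) := by
      have hio : IntegrableOn f (⋃ n, s n) μ := by rw [hU]; exact hint.integrableOn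
      have := tendsto_setIntegral_of_monotone hsm hmono hio
      simpa [hU] using this
    have hμt : Tendsto (fun n => (μ (s n)).toReal) atTop (𝓝 ((μ Set.univ).toReal)) := by
      have h1 : Tendsto (fun n => μ (s n)) atTop (𝓝 (μ (⋃ n, s n))) :=
        tendsto_measure_iUnion_atTop hmono
      rw [hU] at h1
      exact (ENNReal.tendsto_toReal hXfin.ne).comp h1
    have hlim : Tendsto (fun n => (μ (s n)).toReal⁻¹ * ∫ z in s n, f z ∂μ) atTop
        (𝓝 ((μ Set.univ).toReal⁻¹ * ∫ z, f z ∂μ)) :=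
      (hμt.inv₀ hμpos.ne').mul hI
    have hconst : ∀ n : ℕ, (μ (s n)).toReal⁻¹ * ∫ z in s n, f z ∂μ = f x := by
      intro n
      rw [hmvp x (n + 1) (by positivity), setAverage_eq, smul_eq_mul]
      rfl
    have : Tendsto (fun _ : ℕ => f x) atTop (𝓝 ((μ Set.univ).toReal⁻¹ * ∫ z, f z ∂μ)) := by
      simpa [hconst] using hlim
    exact tendsto_nhds_unique tendsto_const_nhds this
  intro x y
  rw [key x, key y]
end
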